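/- Strict submarkov property: if B is a finite connected subgraph with nonempty interior and nonempty boundary, then for all t > 0 and every vertex x ∈ B, Σ_{y∈B} p_t(x,y) < 1, where p_t is the Dirichlet heat kernel of B. -/

import Mathlib

open Finset

attribute [local instance] Classical.propDecidable

variable {V : Type*}

/-- The interior of a finite set of vertices `B`: vertices of `B` all of whose
neighbors lie in `B`.  The boundary `∂B` is `B \ intV B`. -/
def intV [DecidableEq V] (G : SimpleGraph V) [G.LocallyFinite] (B : Finset V) : Finset V :=
  B.filter (fun x => ∀ y ∈ G.neighborFinset x, y ∈ B)

/-- The reduced Dirichlet Laplacian `Δ_B` of a finite subgraph `B`, as a matrix indexed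
by the interior vertices (it acts on the space `C(B, ∂B)` of functions on `B` vanishing
on `∂B`, identified with functions on `int B`):
`(Δ_B)_{x y} = m(x) δ_{x y} - (adjacency)`. -/
noncomputable def dirLap [DecidableEq V] (G : SimpleGraph V) [G.LocallyFinite] (B : Finset V) :
    Matrix ↥(intV G B) ↥(intV G B) ℝ :=
  fun x y => (if x = y then (G.degree x.1 : ℝ) else 0) - (if G.Adj x.1 y.1 then 1 else 0)

/-- The Dirichlet heat kernel `p_t(x,y) = ⟨e^{-tΔ_B} δ_x, δ_y⟩` of the finite subgraph `B`,
where `δ_x = 0` in `C(B, ∂B)` for boundary vertices `x`; it is extended by `0` off the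
interior of `B`. -/
noncomputable def heatKer [DecidableEq V] (G : SimpleGraph V) [G.LocallyFinite]
    (B : Finset V) (t : ℝ) (x y : V) : ℝ :=
  if hx : x ∈ intV G B then
    if hy : y ∈ intV G B then NormedSpace.exp (-(t • dirLap G B)) ⟨x, hx⟩ ⟨y, hy⟩
    else 0
  else 0

section Aux

open scoped Nat

variable {n : Type*} [Fintype n] [DecidableEq n]

private theorem matExp_apply (M : Matrix n n ℝ)
    (h : ∀ i j, Summable fun k : ℕ => ((k ! : ℝ)⁻¹ * (M ^ k) i j)) (i j : n) :
    NormedSpace.exp M i j = ∑' k : ℕ, (k ! : ℝ)⁻¹ * (M ^ k) i j := by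
  have hs : Summable fun k : ℕ => ((k ! : ℝ)⁻¹ • M ^ k : Matrix n n ℝ) := by
    refine Pi.summable.mpr fun i => Pi.summable.mpr fun j => ?_
    simpa [Matrix.smul_apply, smul_eq_mul] using h i j
  rw [NormedSpace.exp_eq_tsum ℝ]
  show (∑' k : ℕ, ((k ! : ℝ)⁻¹ • M ^ k : Matrix n n ℝ)) i j = _
  have e1 := tsum_apply (f := fun k : ℕ => ((k ! : ℝ)⁻¹ • M ^ k : n → n → ℝ)) (x := i) hs
  exact (congrFun e1 j).trans (tsum_apply (x := j) (Pi.summable.mp hs i))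

private theorem pow_entry_nonneg {M : Matrix n n ℝ} (hM : ∀ i j, 0 ≤ M i j) (k : ℕ) :
    ∀ i j, 0 ≤ (M ^ k) i j := by
  induction k with
  | zero => intro i j; simp [Matrix.one_apply]; positivity
  | succ k ih =>
      intro i j
      rw [pow_succ, Matrix.mul_apply]
      exact Finset.sum_nonneg fun z _ => mul_nonneg (ih i z) (hM z j)

private theorem pow_rowsum_le {M : Matrix n n ℝ} (hM : ∀ i j, 0 ≤ M i j) {c : ℝ} (hc : 0 ≤ c)
    (hrow : ∀ i, ∑ j, M i j ≤ c) (k : ℕ) (i : n) :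
    ∑ j, (M ^ k) i j ≤ c ^ k := by
  induction k with
  | zero => simp [Matrix.one_apply]
  | succ k ih =>
      calc ∑ j, (M ^ (k + 1)) i j = ∑ z, (M ^ k) i z * ∑ j, M z j := by
            simp_rw [pow_succ, Matrix.mul_apply, Finset.mul_sum]
            rw [Finset.sum_comm]
        _ ≤ ∑ z, (M ^ k) i z * c :=
            Finset.sum_le_sum fun z _ => mul_le_mul_of_nonneg_left (hrow z)
              (pow_entry_nonneg hM k i z)
        _ = (∑ z, (M ^ k) i z) * c := by rw [Finset.sum_mul]
        _ ≤ c ^ k * c := mul_le_mul_of_nonneg_right ih hc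
        _ = c ^ (k + 1) := (pow_succ c k).symm

private theorem pow_entry_le {M : Matrix n n ℝ} (hM : ∀ i j, 0 ≤ M i j) {c : ℝ} (hc : 0 ≤ c)
    (hrow : ∀ i, ∑ j, M i j ≤ c) (k : ℕ) (i j : n) :
    (M ^ k) i j ≤ c ^ k :=
  le_trans (Finset.single_le_sum (fun z _ => pow_entry_nonneg hM k i z) (Finset.mem_univ j))
    (pow_rowsum_le hM hc hrow k i)

private theorem summable_inv_fact_pow (r : ℝ) : Summable fun k : ℕ => (k ! : ℝ)⁻¹ * r ^ k := by
  simpa [div_eq_inv_mul] using Real.summable_pow_div_factorial r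

private theorem tsum_inv_fact_pow (r : ℝ) : ∑' k : ℕ, (k ! : ℝ)⁻¹ * r ^ k = Real.exp r := by
  rw [Real.exp_eq_exp_ℝ, NormedSpace.exp_eq_tsum_div]
  simp_rw [div_eq_inv_mul]

private theorem matExp_smul_one (r : ℝ) :
    NormedSpace.exp ((r • 1 : Matrix n n ℝ)) = Real.exp r • (1 : Matrix n n ℝ) := by
  have hent : ∀ k : ℕ, ∀ i j : n,
      ((r • (1 : Matrix n n ℝ)) ^ k) i j = r ^ k * (1 : Matrix n n ℝ) i j := by
    intro k i j
    rw [smul_pow, one_pow, Matrix.smul_apply, smul_eq_mul]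
  funext i j
  rw [matExp_apply]
  · simp_rw [hent]
    rcases eq_or_ne i j with h | h
    · subst h
      simp only [Matrix.one_apply_eq, mul_one, Matrix.smul_apply, smul_eq_mul]
      rw [tsum_inv_fact_pow]
    · simp [Matrix.one_apply_ne h, Matrix.smul_apply]
  · intro i j
    simp_rw [hent]
    rcases eq_or_ne i j with h | h
    · subst h; simpa [Matrix.one_apply_eq] using summable_inv_fact_pow r
    · simpa [Matrix.one_apply_ne h] using summable_zero

end Aux

/-- **Strict submarkov property.**  If `B` is a finite connected subgraph with nonempty
interior and nonempty boundary, then for all `t > 0` and every vertex `x ∈ B`,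
`∑_{y ∈ B} p_t(x,y) < 1`, where `p_t` is the Dirichlet heat kernel of `B`. -/
theorem heatKer_sum_lt_one [DecidableEq V] (G : SimpleGraph V) [G.LocallyFinite]
    (B : Finset V) (hconn : ((G.induce (↑B : Set V))).Connected)
    (hint : (intV G B).Nonempty) (hbd : (B \ intV G B).Nonempty)
    (t : ℝ) (ht : 0 < t) (x : V) (hx : x ∈ B) :
    ∑ y ∈ B, heatKer G B t x y < 1 := by
  classical
  by_cases hxI : x ∈ intV G B
  swap
  · have h0 : ∀ y ∈ B, heatKer G B t x y = 0 := fun y _ => by simp [heatKer, hxI]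
    rw [Finset.sum_congr rfl h0, Finset.sum_const_zero]
    norm_num
  -- Main case: `x` is an interior vertex.
  set I : Finset V := intV G B with hI
  have hIB : I ⊆ B := Finset.filter_subset _ _
  set Δ : Matrix ↥I ↥I ℝ := dirLap G B with hΔ
  -- degree bound
  set c : ℝ := ((I.sup fun z => G.degree z : ℕ) : ℝ) with hc
  have hdeg : ∀ i : ↥I, (G.degree i.1 : ℝ) ≤ c := fun i => by
    have h := Finset.le_sup (f := fun z => G.degree z) i.2
    rw [hc]
    exact_mod_cast h
  have hc0 : (0 : ℝ) ≤ c := Nat.cast_nonneg _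
  set M : Matrix ↥I ↥I ℝ := c • 1 - Δ with hM
  have hMapp : ∀ i j : ↥I, M i j =
      (if i = j then c - (G.degree i.1 : ℝ) else 0) + (if G.Adj i.1 j.1 then 1 else 0) := by
    intro i j
    by_cases h : i = j
    · subst h
      simp [hM, hΔ, dirLap, Matrix.sub_apply, Matrix.smul_apply, Matrix.one_apply_eq,
        SimpleGraph.irrefl, smul_eq_mul]
    · simp [hM, hΔ, dirLap, Matrix.sub_apply, Matrix.smul_apply, Matrix.one_apply_ne h, h,
        smul_eq_mul]
  have hMnn : ∀ i j : ↥I, 0 ≤ M i j := by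
    intro i j
    rw [hMapp]
    have h1 : (0:ℝ) ≤ if i = j then c - (G.degree i.1 : ℝ) else 0 := by
      split
      · linarith [hdeg i]
      · exact le_refl 0
    have h2 : (0:ℝ) ≤ if G.Adj i.1 j.1 then 1 else 0 := by split <;> norm_num
    exact add_nonneg h1 h2
  have hMadj : ∀ i j : ↥I, G.Adj i.1 j.1 → (1 : ℝ) ≤ M i j := by
    intro i j hadj
    have hne : i ≠ j := fun h => G.irrefl (h ▸ hadj)
    rw [hMapp, if_neg hne, if_pos hadj]
    norm_num
  -- row sums
  have hrowsum : ∀ i : ↥I, ∑ j, M i j =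
      c - (G.degree i.1 : ℝ) + ((I.filter fun v => G.Adj i.1 v).card : ℝ) := by
    intro i
    simp_rw [hMapp]
    rw [Finset.sum_add_distrib, Finset.sum_ite_eq (Finset.univ : Finset ↥I) i
      (fun _ => c - (G.degree i.1 : ℝ))]
    simp only [Finset.mem_univ, if_pos]
    congr 1
    rw [Finset.sum_coe_sort I (fun v => if G.Adj i.1 v then (1:ℝ) else 0), Finset.sum_boole]
  -- cardinality bounds on neighbours inside `I`
  have hcardle : ∀ i : ↥I, ((I.filter fun v => G.Adj i.1 v).card : ℝ) ≤ (G.degree i.1 : ℝ) := by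
    intro i
    have hsub : I.filter (fun v => G.Adj i.1 v) ⊆ G.neighborFinset i.1 := by
      intro v hv
      rw [SimpleGraph.mem_neighborFinset]
      exact (Finset.mem_filter.mp hv).2
    exact_mod_cast Finset.card_le_card hsub
  have hrow : ∀ i : ↥I, ∑ j, M i j ≤ c := by
    intro i; rw [hrowsum i]; linarith [hcardle i]
  have hrow1 : ∀ i : ↥I, (∃ z, G.Adj i.1 z ∧ z ∉ I) → ∑ j, M i j ≤ c - 1 := by
    rintro i ⟨z, hz, hzI⟩
    have hzm : z ∈ G.neighborFinset i.1 := by simpa using hz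
    have hsub : I.filter (fun v => G.Adj i.1 v) ⊆ (G.neighborFinset i.1).erase z := by
      intro v hv
      rcases Finset.mem_filter.mp hv with ⟨hvI, hva⟩
      exact Finset.mem_erase.mpr ⟨fun h => hzI (h ▸ hvI), by simpa using hva⟩
    have hcard : (I.filter fun v => G.Adj i.1 v).card ≤ G.degree i.1 - 1 := by
      have h := Finset.card_le_card hsub
      rwa [Finset.card_erase_of_mem hzm] at h
    have hd1 : 1 ≤ G.degree i.1 := by
      have : 0 < (G.neighborFinset i.1).card := Finset.card_pos.mpr ⟨z, hzm⟩
      exact this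
    have hcast : ((I.filter fun v => G.Adj i.1 v).card : ℝ) ≤ (G.degree i.1 : ℝ) - 1 := by
      have h2 : ((I.filter fun v => G.Adj i.1 v).card : ℝ) ≤ ((G.degree i.1 - 1 : ℕ) : ℝ) := by
        exact_mod_cast hcard
      rwa [Nat.cast_sub hd1, Nat.cast_one] at h2
    rw [hrowsum i]
    linarith
  -- find an interior vertex, reachable from `x` inside the interior, having a
  -- neighbour outside the interior
  obtain ⟨y, hxy, z0, hyz0, hz0I⟩ :
      ∃ y : ↥I, Relation.ReflTransGen (fun a b : ↥I => G.Adj a.1 b.1) ⟨x, hxI⟩ y ∧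
        ∃ z, G.Adj y.1 z ∧ z ∉ I := by
    by_contra hcon
    push_neg at hcon
    set C : V → Prop := fun v =>
      ∃ hv : v ∈ I, Relation.ReflTransGen (fun a b : ↥I => G.Adj a.1 b.1) ⟨x, hxI⟩ ⟨v, hv⟩
      with hC
    have hCstep : ∀ u w : V, C u → G.Adj u w → C w := by
      rintro u w ⟨hu, hru⟩ huw
      have hwI : w ∈ I := hcon ⟨u, hu⟩ hru w huw
      exact ⟨hwI, hru.tail huw⟩
    have hwalk : ∀ {u v : ↥(↑B : Set V)} (_ : (G.induce (↑B : Set V)).Walk u v), C u.1 → C v.1 := by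
      intro u v p
      induction p with
      | nil => exact id
      | cons ha _ ih =>
          intro hu
          exact ih (hCstep _ _ hu ha)
    obtain ⟨b, hbmem⟩ := hbd
    have hbB : b ∈ B := (Finset.mem_sdiff.mp hbmem).1
    have hbI : b ∉ I := (Finset.mem_sdiff.mp hbmem).2
    obtain ⟨p⟩ := hconn.preconnected ⟨x, Finset.mem_coe.mpr hx⟩ ⟨b, Finset.mem_coe.mpr hbB⟩
    exact hbI (hwalk p ⟨hxI, Relation.ReflTransGen.refl⟩).choose
  -- positivity of some power along the connecting walk
  have hpowpos : ∀ y' : ↥I, Relation.ReflTransGen (fun a b : ↥I => G.Adj a.1 b.1) ⟨x, hxI⟩ y' →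
      ∃ d : ℕ, 0 < (M ^ d) ⟨x, hxI⟩ y' := by
    intro y' h
    induction h with
    | refl => exact ⟨0, by simp [Matrix.one_apply]⟩
    | @tail u v _ huv ih =>
        obtain ⟨d, hd⟩ := ih
        refine ⟨d + 1, ?_⟩
        rw [pow_succ, Matrix.mul_apply]
        refine Finset.sum_pos'
          (fun z _ => mul_nonneg (pow_entry_nonneg hMnn d _ _) (hMnn _ _))
          ⟨u, Finset.mem_univ u, ?_⟩
        exact mul_pos hd (lt_of_lt_of_le one_pos (hMadj _ _ huv))
  obtain ⟨d, hd⟩ := hpowpos y hxy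
  set xI : ↥I := ⟨x, hxI⟩ with hxIdef
  set a : ℕ → ℝ := fun k => ∑ j, (M ^ k) xI j with ha
  have hak : ∀ k, 0 ≤ a k := fun k => Finset.sum_nonneg fun j _ => pow_entry_nonneg hMnn k _ _
  have hakc : ∀ k, a k ≤ c ^ k := fun k => pow_rowsum_le hMnn hc0 hrow k xI
  -- strict bound at `k = d + 1`
  have hstrict : a (d + 1) ≤ c ^ (d + 1) - (M ^ d) xI y := by
    have h1 : a (d + 1) = ∑ z, (M ^ d) xI z * ∑ j, M z j := by
      rw [ha]
      simp_rw [pow_succ, Matrix.mul_apply, Finset.mul_sum]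
      rw [Finset.sum_comm]
    have h2 : ∀ z : ↥I, (M ^ d) xI z * ∑ j, M z j ≤
        (M ^ d) xI z * c - (if z = y then (M ^ d) xI z else 0) := by
      intro z
      by_cases hz : z = y
      · subst hz
        rw [if_pos rfl]
        have hr := hrow1 z ⟨z0, hyz0, hz0I⟩
        have hnn := pow_entry_nonneg hMnn d xI z
        nlinarith
      · rw [if_neg hz]
        have := mul_le_mul_of_nonneg_left (hrow z) (pow_entry_nonneg hMnn d xI z)
        linarith
    have h3 : ∑ z, ((M ^ d) xI z * c - (if z = y then (M ^ d) xI z else 0)) =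
        (∑ z, (M ^ d) xI z) * c - (M ^ d) xI y := by
      rw [Finset.sum_sub_distrib, ← Finset.sum_mul, Finset.sum_ite_eq' Finset.univ y]
      simp
    have h4 : (∑ z, (M ^ d) xI z) * c ≤ c ^ d * c :=
      mul_le_mul_of_nonneg_right (pow_rowsum_le hMnn hc0 hrow d xI) hc0
    calc a (d + 1) = ∑ z, (M ^ d) xI z * ∑ j, M z j := h1
      _ ≤ ∑ z, ((M ^ d) xI z * c - (if z = y then (M ^ d) xI z else 0)) :=
          Finset.sum_le_sum fun z _ => h2 z
      _ = (∑ z, (M ^ d) xI z) * c - (M ^ d) xI y := h3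
      _ ≤ c ^ d * c - (M ^ d) xI y := by linarith
      _ = c ^ (d + 1) - (M ^ d) xI y := by rw [pow_succ]
  have hadlt : a (d + 1) < c ^ (d + 1) := by linarith
  -- summability of the entrywise exponential series of `t • M`
  have htMk : ∀ (k : ℕ) (i j : ↥I), ((t • M) ^ k) i j = t ^ k * (M ^ k) i j := by
    intro k i j
    rw [smul_pow, Matrix.smul_apply, smul_eq_mul]
  have hSum : ∀ i j : ↥I,
      Summable fun k : ℕ => ((Nat.factorial k : ℝ)⁻¹ * ((t • M) ^ k) i j) := by
    intro i j
    refine Summable.of_nonneg_of_le (fun k => ?_) (fun k => ?_) (summable_inv_fact_pow (t * c))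
    · rw [htMk]
      have := pow_entry_nonneg hMnn k i j
      positivity
    · rw [htMk, mul_pow]
      have h1 := pow_entry_le hMnn hc0 hrow k i j
      have h2 : (0:ℝ) ≤ t ^ k := by positivity
      have h3 : (0:ℝ) ≤ (Nat.factorial k : ℝ)⁻¹ := by positivity
      exact mul_le_mul_of_nonneg_left (mul_le_mul_of_nonneg_left h1 h2) h3
  -- splitting of the exponential
  have hexp : NormedSpace.exp (-(t • Δ)) =
      Real.exp (-(t * c)) • NormedSpace.exp (t • M) := by
    have hsplit : -(t • Δ) = (-(t * c)) • (1 : Matrix ↥I ↥I ℝ) + t • M := by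
      rw [hM]
      module
    rw [hsplit, Matrix.exp_add_of_commute _ _
      ((Commute.one_left (t • M)).smul_left (-(t * c))), matExp_smul_one,
      smul_mul_assoc, one_mul]
  -- computing the sum over `B`
  have hBI : ∑ y' ∈ B, heatKer G B t x y' =
      ∑ j : ↥I, NormedSpace.exp (-(t • Δ)) xI j := by
    rw [← Finset.sum_subset hIB (fun y' _ hyI => by simp [heatKer, ← hI, hyI])]
    rw [← Finset.sum_coe_sort I (fun y' => heatKer G B t x y')]
    refine Finset.sum_congr rfl fun j _ => ?_
    simp only [heatKer]
    rw [dif_pos hxI, dif_pos j.2]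
  have hsum2 : ∑ j : ↥I, NormedSpace.exp (t • M) xI j =
      ∑' k : ℕ, ((Nat.factorial k : ℝ)⁻¹ * (t ^ k * a k)) := by
    rw [Finset.sum_congr rfl (fun j _ => matExp_apply _ hSum xI j)]
    rw [← Summable.tsum_finsetSum (fun j _ => hSum xI j)]
    refine tsum_congr fun k => ?_
    rw [ha]
    simp_rw [htMk]
    rw [← Finset.mul_sum, ← Finset.mul_sum]
  -- final comparison of series
  have key : ∑' k : ℕ, ((Nat.factorial k : ℝ)⁻¹ * (t ^ k * a k)) < Real.exp (t * c) := by
    rw [← tsum_inv_fact_pow (t * c)]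
    have hle : ∀ k : ℕ, (Nat.factorial k : ℝ)⁻¹ * (t ^ k * a k) ≤
        (Nat.factorial k : ℝ)⁻¹ * (t * c) ^ k := by
      intro k
      rw [mul_pow]
      have h2 : (0:ℝ) ≤ t ^ k := by positivity
      have h3 : (0:ℝ) ≤ (Nat.factorial k : ℝ)⁻¹ := by positivity
      exact mul_le_mul_of_nonneg_left (mul_le_mul_of_nonneg_left (hakc k) h2) h3
    refine Summable.tsum_lt_tsum (i := d + 1) hle ?_ ?_ (summable_inv_fact_pow (t * c))
    · rw [mul_pow]
      have h2 : (0:ℝ) < t ^ (d + 1) := by positivity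
      have h3 : (0:ℝ) < (Nat.factorial (d + 1) : ℝ)⁻¹ := by positivity
      exact mul_lt_mul_of_pos_left (mul_lt_mul_of_pos_left hadlt h2) h3
    · exact Summable.of_nonneg_of_le
        (fun k => by have := hak k; positivity) hle (summable_inv_fact_pow (t * c))
  -- put everything together
  rw [hBI]
  have hterm : ∀ j : ↥I, NormedSpace.exp (-(t • Δ)) xI j =
      Real.exp (-(t * c)) * NormedSpace.exp (t • M) xI j := by
    intro j
    rw [hexp, Matrix.smul_apply, smul_eq_mul]
  rw [Finset.sum_congr rfl fun j _ => hterm j, ← Finset.mul_sum, hsum2]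
  calc Real.exp (-(t * c)) * ∑' k : ℕ, ((Nat.factorial k : ℝ)⁻¹ * (t ^ k * a k))
      < Real.exp (-(t * c)) * Real.exp (t * c) :=
        mul_lt_mul_of_pos_left key (Real.exp_pos _)
    _ = 1 := by rw [← Real.exp_add, neg_add_cancel, Real.exp_zero]
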